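/- Let (A, ≤, ', 0, 1) be a finite orthomodular poset, (T, R) a serial time frame, B, C nonempty subsets of A^T with B ≤ C (p ≤ q pointwise for all p ∈ B, q ∈ C). Then P(B)(s) ≤₂ P(C)(s) and H(B)(s) ≤₁ H(C)(s) for all s ∈ T. -/

import Mathlib

section
variable (A : Type*)

/-- Set of minimal upper bounds. -/
def MinU [PartialOrder A] (S : Set A) : Set A := {a | Minimal (· ∈ upperBounds S) a}

/-- Set of maximal lower bounds. -/
def MaxL [PartialOrder A] (S : Set A) : Set A := {a | Maximal (· ∈ lowerBounds S) a}

/-- An orthomodular poset: a bounded poset with an antitone involution that is a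
complementation, such that orthogonal elements have a join and the orthomodular law holds. -/
structure OMP [PartialOrder A] [BoundedOrder A] where
  compl : A → A
  compl_antitone : ∀ a b : A, a ≤ b → compl b ≤ compl a
  compl_involutive : ∀ a : A, compl (compl a) = a
  sup_compl : ∀ a : A, IsLUB {a, compl a} ⊤
  inf_compl : ∀ a : A, IsGLB {a, compl a} ⊥
  ortho_sup : ∀ a b : A, a ≤ compl b → ∃ c, IsLUB {a, b} c
  oml : ∀ a b m : A, a ≤ b → IsGLB {b, compl a} m → IsLUB {a, m} b

end

section
variable {A T : Type*} [PartialOrder A]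

/-- `B ≤₁ C`: every element of `B` is below some element of `C`. -/
def le1 (B C : Set A) : Prop := ∀ b ∈ B, ∃ c ∈ C, b ≤ c

/-- `B ≤₂ C`: every element of `C` is above some element of `B`. -/
def le2 (B C : Set A) : Prop := ∀ c ∈ C, ∃ b ∈ B, b ≤ c

/-- The tense operator `P(q)(s) := Min U({q(t) : t R s})`. -/
def Pop (R : T → T → Prop) (q : T → A) (s : T) : Set A := MinU A (q '' {t | R t s})

/-- The tense operator `F(q)(s) := Min U({q(t) : s R t})`. -/
def Fop (R : T → T → Prop) (q : T → A) (s : T) : Set A := MinU A (q '' {t | R s t})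

/-- The tense operator `H(q)(s) := Max L({q(t) : t R s})`. -/
def Hop (R : T → T → Prop) (q : T → A) (s : T) : Set A := MaxL A (q '' {t | R t s})

/-- The tense operator `G(q)(s) := Max L({q(t) : s R t})`. -/
def Gop (R : T → T → Prop) (q : T → A) (s : T) : Set A := MaxL A (q '' {t | R s t})

/-- A relation is serial if every element has a predecessor and a successor. -/
def Serial (R : T → T → Prop) : Prop := ∀ s : T, (∃ r, R r s) ∧ (∃ t, R s t)

end

section
variable {A T : Type*} [PartialOrder A]

/-- The lifted tense operator `P(B)(s) := Min U({q(t) : q ∈ B, t R s})`. -/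
def PopS (R : T → T → Prop) (B : Set (T → A)) (s : T) : Set A :=
  MinU A {a | ∃ q ∈ B, ∃ t, R t s ∧ q t = a}

/-- The lifted tense operator `H(B)(s) := Max L({q(t) : q ∈ B, t R s})`. -/
def HopS (R : T → T → Prop) (B : Set (T → A)) (s : T) : Set A :=
  MaxL A {a | ∃ q ∈ B, ∃ t, R t s ∧ q t = a}

end

/-- If `B ≤ C` then `P(B)(s) ≤₂ P(C)(s)` and `H(B)(s) ≤₁ H(C)(s)`. -/
theorem stmt_13 {A T : Type*} [PartialOrder A] [BoundedOrder A] [Finite A] (M : OMP A)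
    (R : T → T → Prop) (hR : Serial R) (B C : Set (T → A)) (hB : B.Nonempty)
    (hC : C.Nonempty) (hBC : ∀ p ∈ B, ∀ q ∈ C, ∀ t, p t ≤ q t) :
    ∀ s : T, le2 (PopS R B s) (PopS R C s) ∧ le1 (HopS R B s) (HopS R C s) := by
  intro s
  obtain ⟨p0, hp0⟩ := hB
  obtain ⟨q0, hq0⟩ := hC
  constructor
  · intro c hc
    have hcub : c ∈ upperBounds {a | ∃ q ∈ B, ∃ t, R t s ∧ q t = a} := by
      rintro a ⟨p, hp, t, ht, rfl⟩
      exact le_trans (hBC p hp q0 hq0 t) (hc.1 ⟨q0, hq0, t, ht, rfl⟩)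
    obtain ⟨b, hbc, hb⟩ := Finite.exists_le_minimal hcub
    exact ⟨b, hb, hbc⟩
  · intro b hb
    have hblb : b ∈ lowerBounds {a | ∃ q ∈ C, ∃ t, R t s ∧ q t = a} := by
      rintro a ⟨q, hq, t, ht, rfl⟩
      exact le_trans (hb.1 ⟨p0, hp0, t, ht, rfl⟩) (hBC p0 hp0 q hq t)
    obtain ⟨c, hbc, hc⟩ := Finite.exists_le_maximal hblb
    exact ⟨c, hc, hbc⟩
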